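/- Let A ≤ S_m and B ≤ S_n. Then δ_1(A≀_I B) = δ_1(A) · 𝒫'_B(δ(A)), where 𝒫'_B(x) = ∑_{ℓ=1}^{n} ℓ δ_ℓ(B) x^{ℓ−1} is the derivative of the polynomial 𝒫_B(x) = ∑_{ℓ=0}^{n} δ_ℓ(B) x^ℓ. -/

import Mathlib

open Equiv Finset

/-- The number of fixed points of a permutation. -/
noncomputable def fixCnt {X : Type*} (g : Equiv.Perm X) : ℕ := {x | g x = x}.ncard

/-- The proportion of elements `a` of the set `C` such that the permutation `f a`
has exactly `k` fixed points. -/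
noncomputable def propFixVia {α X : Type*} (f : α → Equiv.Perm X) (C : Set α) (k : ℕ) : ℝ :=
  (({a ∈ C | fixCnt (f a) = k}).ncard : ℝ) / (C.ncard : ℝ)

/-- `δ_k(C)`: the proportion of elements of `C ⊆ Sym(X)` with exactly `k` fixed points. -/
noncomputable def propFix {X : Type*} (C : Set (Equiv.Perm X)) (k : ℕ) : ℝ :=
  propFixVia id C k

/-- The element `(α, b)` of the wreath product acting on `X × Y` via the imprimitive
action `(x, y) ↦ (x α(y), y b)`. -/
def imprimPerm {X Y : Type*} (α : Y → Equiv.Perm X) (b : Equiv.Perm Y) :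
    Equiv.Perm (X × Y) where
  toFun p := (α p.2 p.1, b p.2)
  invFun p := ((α (b⁻¹ p.2))⁻¹ p.1, b⁻¹ p.2)
  left_inv p := by simp
  right_inv p := by simp

/-- The element `(α, b)` of the wreath product acting on `X^Y` via the power action
`(ω(α,b))(y) = ω(y b⁻¹) α(y b⁻¹)`. -/
def powerPerm {X Y : Type*} (α : Y → Equiv.Perm X) (b : Equiv.Perm Y) :
    Equiv.Perm (Y → X) where
  toFun ω y := α (b⁻¹ y) (ω (b⁻¹ y))
  invFun ω y := (α y)⁻¹ (ω (b y))
  left_inv ω := by funext y; simp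
  right_inv ω := by funext y; simp

/-- The number of cycles of a permutation in its disjoint cycle decomposition,
where fixed points are counted as 1-cycles. -/
noncomputable def cycleCnt {Y : Type*} [Fintype Y] [DecidableEq Y] (b : Equiv.Perm Y) : ℕ :=
  b.cycleType.card + fixCnt b

/-- The underlying set of the wreath product `A ≀ B` (pairs `(α, b)`). -/
def wreathSet {m n : ℕ} (A : Subgroup (Equiv.Perm (Fin m))) (B : Subgroup (Equiv.Perm (Fin n))) :
    Set ((Fin n → Equiv.Perm (Fin m)) × Equiv.Perm (Fin n)) :=
  {p | (∀ y, p.1 y ∈ A) ∧ p.2 ∈ B}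

/-- `δ_k(A ≀_I B)` for the imprimitive action on `[m] × [n]`. -/
noncomputable def deltaI {m n : ℕ} (A : Subgroup (Equiv.Perm (Fin m)))
    (B : Subgroup (Equiv.Perm (Fin n))) (k : ℕ) : ℝ :=
  propFixVia (fun p => imprimPerm p.1 p.2) (wreathSet A B) k

/-- `δ_k(A ≀_P B)` for the power action on `[m]^[n]`. -/
noncomputable def deltaP {m n : ℕ} (A : Subgroup (Equiv.Perm (Fin m)))
    (B : Subgroup (Equiv.Perm (Fin n))) (k : ℕ) : ℝ :=
  propFixVia (fun p => powerPerm p.1 p.2) (wreathSet A B) k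

/-- `[B, ℓ]`: the number of elements of `B` with exactly `ℓ` cycles. -/
noncomputable def stirCnt {n : ℕ} (B : Subgroup (Equiv.Perm (Fin n))) (ℓ : ℕ) : ℕ :=
  {b ∈ (B : Set (Equiv.Perm (Fin n))) | cycleCnt b = ℓ}.ncard

/-- A subgroup `A ≤ Sym(X)` is primitive if it is transitive and every block is trivial
(equivalently, it preserves no nontrivial partition of `X`). -/
def IsPrimitiveSubgroup {X : Type*} (A : Subgroup (Equiv.Perm X)) : Prop :=
  MulAction.IsPretransitive A X ∧
  ∀ s : Set X, MulAction.IsBlock A s → s.Subsingleton ∨ s = Set.univ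


lemma ncard_setOf_eq {γ : Type*} [Fintype γ] (p : γ → Prop) [DecidablePred p] :
    {x | p x}.ncard = (univ.filter p).card := by
  rw [Set.ncard_eq_toFinset_card', Set.toFinset_setOf]

lemma fixCnt_eq_card {X : Type*} [Fintype X] [DecidableEq X] (g : Perm X) :
    fixCnt g = (univ.filter fun x => g x = x).card :=
  ncard_setOf_eq _

lemma fixCnt_imprim {m n : ℕ} (α : Fin n → Perm (Fin m)) (b : Perm (Fin n)) :
    fixCnt (imprimPerm α b) = ∑ y ∈ univ.filter (fun y => b y = y), fixCnt (α y) := by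
  classical
  rw [fixCnt_eq_card, Finset.card_filter, Fintype.sum_prod_type_right, Finset.sum_filter]
  refine Finset.sum_congr rfl fun y _ => ?_
  by_cases hy : b y = y
  · simp only [hy, if_true]
    rw [fixCnt_eq_card, Finset.card_filter]
    refine Finset.sum_congr rfl fun x _ => ?_
    have h : imprimPerm α b (x, y) = (x, y) ↔ α y x = x := by
      simp [imprimPerm, hy, Prod.ext_iff]
    simp [h]
  · refine (Finset.sum_eq_zero fun x _ => ?_).trans (by simp [hy])
    have h : ¬ imprimPerm α b (x, y) = (x, y) := by
      simp [imprimPerm, Prod.ext_iff, hy]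
    simp [h]

lemma card_pi_filter {ι : Type*} [Fintype ι] [DecidableEq ι] {π : ι → Type*} [∀ i, Fintype (π i)]
    [∀ i, DecidableEq (π i)]
    (p : ∀ i, π i → Prop) [∀ i, DecidablePred (p i)] :
    (univ.filter fun f : ∀ i, π i => ∀ i, p i (f i)).card
      = ∏ i, (univ.filter (p i)).card := by
  classical
  rw [← Fintype.card_subtype, Fintype.card_congr (Equiv.subtypePiEquivPi (p := p)),
    Fintype.card_pi]
  exact Finset.prod_congr rfl fun i _ => Fintype.card_subtype (p i)

lemma count_sum_one {ι G : Type*} [Fintype ι] [DecidableEq ι] [Fintype G] [DecidableEq G]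
    (p : G → Prop) [DecidablePred p] (w : G → ℕ) (s : Finset ι) :
    (univ.filter fun f : ι → G => (∀ i, p (f i)) ∧ (∑ i ∈ s, w (f i)) = 1).card
      = s.card * (univ.filter fun g => p g ∧ w g = 1).card
          * (univ.filter fun g => p g ∧ w g = 0).card ^ (s.card - 1)
          * (univ.filter p).card ^ (Fintype.card ι - s.card) := by
  classical
  have key : (univ.filter fun f : ι → G => (∀ i, p (f i)) ∧ (∑ i ∈ s, w (f i)) = 1)
      = s.biUnion (fun i0 => univ.filter fun f : ι → G =>
          ∀ i, p (f i) ∧ (i = i0 → w (f i) = 1) ∧ (i ∈ s ∧ i ≠ i0 → w (f i) = 0)) := by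
    ext f
    simp only [mem_filter, mem_univ, true_and, mem_biUnion]
    constructor
    · rintro ⟨hp, hsum⟩
      obtain ⟨i0, hi0, hne⟩ : ∃ i0 ∈ s, w (f i0) ≠ 0 := by
        by_contra h
        push_neg at h
        rw [Finset.sum_eq_zero h] at hsum
        exact one_ne_zero hsum.symm
      have hle : w (f i0) ≤ ∑ i ∈ s, w (f i) := Finset.single_le_sum (f := fun i => w (f i))
        (fun i _ => Nat.zero_le _) hi0
      have h1 : w (f i0) = 1 := by omega
      have h0 : ∑ i ∈ s.erase i0, w (f i) = 0 := by
        have hadd : w (f i0) + ∑ i ∈ s.erase i0, w (f i) = ∑ i ∈ s, w (f i) :=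
          Finset.add_sum_erase s (fun i => w (f i)) hi0
        omega
      refine ⟨i0, hi0, fun i => ⟨hp i, fun h => h ▸ h1, fun hh => ?_⟩⟩
      exact (Finset.sum_eq_zero_iff.mp h0) i (Finset.mem_erase.mpr ⟨hh.2, hh.1⟩)
    · rintro ⟨i0, hi0, h⟩
      refine ⟨fun i => (h i).1, ?_⟩
      rw [← Finset.add_sum_erase s _ hi0, (h i0).2.1 rfl,
        Finset.sum_eq_zero fun i hi =>
          (h i).2.2 ⟨(Finset.mem_erase.mp hi).2, (Finset.mem_erase.mp hi).1⟩]
      rfl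
  rw [key, Finset.card_biUnion]
  · have hterm : ∀ i0 ∈ s,
        (univ.filter fun f : ι → G =>
          ∀ i, p (f i) ∧ (i = i0 → w (f i) = 1) ∧ (i ∈ s ∧ i ≠ i0 → w (f i) = 0)).card
        = (univ.filter fun g => p g ∧ w g = 1).card
            * (univ.filter fun g => p g ∧ w g = 0).card ^ (s.card - 1)
            * (univ.filter p).card ^ (Fintype.card ι - s.card) := by
      intro i0 hi0
      rw [card_pi_filter (fun i g => p g ∧ (i = i0 → w g = 1) ∧ (i ∈ s ∧ i ≠ i0 → w g = 0))]
      rw [← Finset.prod_mul_prod_compl s]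
      have h1 : ∀ i ∈ sᶜ,
          (univ.filter fun g => p g ∧ (i = i0 → w g = 1) ∧ (i ∈ s ∧ i ≠ i0 → w g = 0)).card
          = (univ.filter p).card := by
        intro i hi
        have his : i ∉ s := Finset.mem_compl.mp hi
        have hii0 : i ≠ i0 := fun h => his (h ▸ hi0)
        congr 1
        ext g
        simp [his, hii0]
      have h2 : ∀ i ∈ s.erase i0,
          (univ.filter fun g => p g ∧ (i = i0 → w g = 1) ∧ (i ∈ s ∧ i ≠ i0 → w g = 0)).card
          = (univ.filter fun g => p g ∧ w g = 0).card := by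
        intro i hi
        obtain ⟨hii0, his⟩ := Finset.mem_erase.mp hi
        congr 1
        ext g
        simp [his, hii0]
      have h3 :
          (univ.filter fun g => p g ∧ (i0 = i0 → w g = 1) ∧ (i0 ∈ s ∧ i0 ≠ i0 → w g = 0)).card
          = (univ.filter fun g => p g ∧ w g = 1).card := by
        congr 1; ext g; simp
      rw [Finset.prod_congr rfl h1, Finset.prod_const,
        ← Finset.mul_prod_erase s _ hi0, h3, Finset.prod_congr rfl h2,
        Finset.prod_const, Finset.card_erase_of_mem hi0, Finset.card_compl]
    rw [Finset.sum_congr rfl hterm, Finset.sum_const, smul_eq_mul]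
    ring
  · intro i0 h0 i1 h1 hne
    rw [Function.onFun, Finset.disjoint_left]
    intro f hf0 hf1
    simp only [mem_filter, mem_univ, true_and] at hf0 hf1
    have e1 := (hf0 i0).2.1 rfl
    have e0 := (hf1 i0).2.2 ⟨h0, hne⟩
    omega

lemma propFix_eq_card {X : Type*} [Fintype X] [DecidableEq X] (C : Set (Perm X)) (k : ℕ)
    [DecidablePred (· ∈ C)] :
    propFix C k = ((univ.filter fun g => g ∈ C ∧ fixCnt g = k).card : ℝ)
      / ((univ.filter (· ∈ C)).card : ℝ) := by
  have h1 : ({a ∈ C | fixCnt (id a) = k}).ncard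
      = (univ.filter fun g => g ∈ C ∧ fixCnt g = k).card :=
    ncard_setOf_eq _
  have h2 : C.ncard = (univ.filter (· ∈ C)).card := by
    have := ncard_setOf_eq (· ∈ C)
    rwa [Set.setOf_mem_eq] at this
  rw [propFix, propFixVia, h1, h2]

set_option maxHeartbeats 1000000 in
/-- **Corollary (`δ_1` of the imprimitive wreath product).**
For `A ≤ S_m` and `B ≤ S_n`,
`δ_1(A ≀_I B) = δ_1(A) ⋅ 𝒫'_B(δ(A))` where
`𝒫'_B(x) = ∑_{ℓ=1}^n ℓ δ_ℓ(B) x^{ℓ-1}`. -/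
theorem delta_one_imprimitive_wreath (m n : ℕ)
    (A : Subgroup (Equiv.Perm (Fin m))) (B : Subgroup (Equiv.Perm (Fin n))) :
    deltaI A B 1 =
      propFix (A : Set (Equiv.Perm (Fin m))) 1 *
        ∑ ℓ ∈ Finset.Icc 1 n, (ℓ : ℝ) * propFix (B : Set (Equiv.Perm (Fin n))) ℓ *
          (propFix (A : Set (Equiv.Perm (Fin m))) 0) ^ (ℓ - 1) := by
  classical
  set Af : Finset (Perm (Fin m)) := univ.filter (fun g => g ∈ A) with hAf
  set Bf : Finset (Perm (Fin n)) := univ.filter (fun b => b ∈ B) with hBf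
  set F1 : Finset (Perm (Fin m)) := univ.filter (fun g => g ∈ A ∧ fixCnt g = 1) with hF1
  set F0 : Finset (Perm (Fin m)) := univ.filter (fun g => g ∈ A ∧ fixCnt g = 0) with hF0
  have haf0 : (0 : ℝ) < Af.card := by
    exact_mod_cast Finset.card_pos.mpr ⟨1, mem_filter.mpr ⟨mem_univ _, A.one_mem⟩⟩
  have hbf0 : (0 : ℝ) < Bf.card := by
    exact_mod_cast Finset.card_pos.mpr ⟨1, mem_filter.mpr ⟨mem_univ _, B.one_mem⟩⟩
  have hane : (Af.card : ℝ) ≠ 0 := ne_of_gt haf0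
  have hbne : (Bf.card : ℝ) ≠ 0 := ne_of_gt hbf0
  have hfixle : ∀ b : Perm (Fin n), fixCnt b ≤ n := fun b => by
    rw [fixCnt_eq_card]
    exact le_trans (Finset.card_filter_le _ _) (by simp)
  set N : ℕ := (univ.filter fun p : (Fin n → Perm (Fin m)) × Perm (Fin n) =>
    p ∈ wreathSet A B ∧ fixCnt (imprimPerm p.1 p.2) = 1).card with hNdef
  set G : ℕ → ℕ := fun ℓ => ℓ * F1.card * F0.card ^ (ℓ - 1) * Af.card ^ (n - ℓ) with hG
  set cnt : ℕ → ℕ := fun ℓ => (Bf.filter (fun b => fixCnt b = ℓ)).card with hcnt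
  have step1 : N = ∑ b : Perm (Fin n), if b ∈ B then G (fixCnt b) else 0 := by
    rw [hNdef, Finset.card_filter, Fintype.sum_prod_type_right]
    refine Finset.sum_congr rfl fun b _ => ?_
    by_cases hb : b ∈ B
    · have hiff : ∀ α : Fin n → Perm (Fin m),
          (((α, b) ∈ wreathSet A B ∧ fixCnt (imprimPerm (α, b).1 (α, b).2) = 1)
            ↔ ((∀ y, α y ∈ A) ∧ ∑ y ∈ univ.filter (fun y => b y = y), fixCnt (α y) = 1)) := by
        intro α
        have hm : (α, b) ∈ wreathSet A B ↔ ((∀ y, α y ∈ A) ∧ b ∈ B) := Iff.rfl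
        rw [show imprimPerm (α, b).1 (α, b).2 = imprimPerm α b from rfl, fixCnt_imprim, hm]
        exact ⟨fun ⟨⟨h1, _⟩, h2⟩ => ⟨h1, h2⟩, fun ⟨h1, h2⟩ => ⟨⟨h1, hb⟩, h2⟩⟩
      have hc : (univ.filter fun α : Fin n → Perm (Fin m) =>
          (∀ y, α y ∈ A) ∧ ∑ y ∈ univ.filter (fun y => b y = y), fixCnt (α y) = 1).card
          = G (fixCnt b) := by
        have hcs := count_sum_one (ι := Fin n) (fun g : Perm (Fin m) => g ∈ A) fixCnt
          (univ.filter (fun y => b y = y))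
        rw [← fixCnt_eq_card b] at hcs
        simp only [Fintype.card_fin] at hcs
        rw [hG, hF1, hF0, hAf]
        convert hcs using 2
        ext f
        simp
      simp only [hiff]
      rw [← Finset.card_filter, if_pos hb]
      exact hc
    · rw [if_neg hb]
      refine Finset.sum_eq_zero fun α _ => ?_
      rw [if_neg (fun h => hb h.1.2)]
  have step2 : N = ∑ ℓ ∈ Finset.range (n + 1), cnt ℓ * G ℓ := by
    rw [step1, ← Finset.sum_filter, ← hBf]
    rw [← Finset.sum_fiberwise_of_maps_to
      (t := Finset.range (n + 1)) (g := fixCnt)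
      (fun b _ => Finset.mem_range.mpr (Nat.lt_succ_of_le (hfixle b)))
      (fun b => G (fixCnt b))]
    refine Finset.sum_congr rfl fun ℓ _ => ?_
    rw [Finset.sum_congr rfl fun b hbmem => by
      rw [(Finset.mem_filter.mp hbmem).2]]
    rw [Finset.sum_const, smul_eq_mul]
  have step3 : N = ∑ ℓ ∈ Finset.Icc 1 n, cnt ℓ * G ℓ := by
    rw [step2]
    refine (Finset.sum_subset (fun ℓ hℓ => ?_) (fun ℓ hℓ hℓ' => ?_)).symm
    · obtain ⟨h1, h2⟩ := Finset.mem_Icc.mp hℓ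
      exact Finset.mem_range.mpr (by omega)
    · have hℓ0 : ℓ = 0 := by
        have := Finset.mem_range.mp hℓ
        simp only [Finset.mem_Icc] at hℓ'
        omega
      subst hℓ0
      simp [hG]
  have hNum : ({p ∈ wreathSet A B |
      fixCnt ((fun p : (Fin n → Perm (Fin m)) × Perm (Fin n) => imprimPerm p.1 p.2) p) = 1}
        : Set _).ncard = N :=
    ncard_setOf_eq _
  have hDen : (wreathSet A B).ncard = Af.card ^ n * Bf.card := by
    have h1 : (wreathSet A B).ncard
        = (univ.filter fun p : (Fin n → Perm (Fin m)) × Perm (Fin n) =>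
            (∀ y, p.1 y ∈ A) ∧ p.2 ∈ B).card :=
      ncard_setOf_eq _
    rw [h1, Finset.card_filter, Fintype.sum_prod_type_right]
    have hstep : ∀ b : Perm (Fin n),
        (∑ α : Fin n → Perm (Fin m),
          if (∀ y, (α, b).1 y ∈ A) ∧ (α, b).2 ∈ B then 1 else 0)
          = if b ∈ B then Af.card ^ n else 0 := by
      intro b
      by_cases hb : b ∈ B
      · rw [if_pos hb]
        have : ∀ α : Fin n → Perm (Fin m),
            ((∀ y, (α, b).1 y ∈ A) ∧ (α, b).2 ∈ B) ↔ (∀ y, α y ∈ A) :=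
          fun α => ⟨fun h => h.1, fun h => ⟨h, hb⟩⟩
        simp only [this]
        have hcp := card_pi_filter (ι := Fin n) (π := fun _ => Perm (Fin m)) (fun _ g => g ∈ A)
        simp only [Finset.prod_const, Finset.card_univ, Fintype.card_fin] at hcp
        rw [← Finset.card_filter, hAf]
        convert hcp using 2
        ext f
        simp
      · rw [if_neg hb]
        refine Finset.sum_eq_zero fun α _ => ?_
        rw [if_neg (fun h => hb h.2)]
    rw [Finset.sum_congr rfl fun b _ => hstep b, ← Finset.sum_filter, ← hBf,
      Finset.sum_const, smul_eq_mul, mul_comm]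
  have hAfd : univ.filter (fun g => g ∈ (A : Set (Perm (Fin m)))) = Af := by
    ext g; simp [hAf]
  have hBfd : univ.filter (fun g => g ∈ (B : Set (Perm (Fin n)))) = Bf := by
    ext g; simp [hBf]
  have hPA1 : propFix (A : Set (Perm (Fin m))) 1 = (F1.card : ℝ) / (Af.card : ℝ) := by
    rw [propFix_eq_card, hAfd]
    congr 2
  have hPA0 : propFix (A : Set (Perm (Fin m))) 0 = (F0.card : ℝ) / (Af.card : ℝ) := by
    rw [propFix_eq_card, hAfd]
    congr 2
  have hPB : ∀ ℓ, propFix (B : Set (Perm (Fin n))) ℓ = (cnt ℓ : ℝ) / (Bf.card : ℝ) := by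
    intro ℓ
    rw [propFix_eq_card, hBfd]
    have hfe : (univ.filter fun g => g ∈ (B : Set (Perm (Fin n))) ∧ fixCnt g = ℓ)
        = Bf.filter (fun b => fixCnt b = ℓ) := by
      ext g; simp [hBf]
    rw [hfe, hcnt]
  rw [deltaI, propFixVia, hNum, hDen, step3, hPA1, hPA0]
  simp only [hPB, hG]
  push_cast
  rw [Finset.sum_div, Finset.mul_sum]
  refine Finset.sum_congr rfl fun ℓ hℓ => ?_
  obtain ⟨h1, h2⟩ := Finset.mem_Icc.mp hℓ
  have hpow : (Af.card : ℝ) ^ n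
      = (Af.card : ℝ) ^ (n - ℓ) * ((Af.card : ℝ) ^ (ℓ - 1) * (Af.card : ℝ)) := by
    rw [← pow_succ, ← pow_add]
    congr 1
    omega
  rw [hpow]
  field_simp
  rw [div_pow, mul_assoc _ ((Af.card : ℝ) ^ (ℓ - 1)), mul_div_assoc',
    mul_div_cancel_left₀ _ (pow_ne_zero _ hane)]
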